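/- Let p ∈ ℝ, φ₀ ∈ (0, π/2), let r̃ : ℝ → ℂ be differentiable with derivative r̃′ ∈ L²(ℝ), and let X : ℝ → ℝ be differentiable with 0 ≤ X ≤ 1. On the open sector Ω = {z ∈ ℂ : 0 < arg(z − p) < φ₀} define R(z) = (1 − X(Re z))·(r̃(Re z) − r̃(p))·cos((π/(2φ₀))·arg(z − p)) + r̃(p). Then R, viewed as a function of (Re z, Im z), is differentiable on Ω, and its ∂̄-derivative ∂̄R := (∂_x R + i ∂_y R)/2 satisfies, for all z ∈ Ω, |∂̄R(z)| ≤ (1/2)|r̃′(Re z)| + (1/2)|X′(Re z)|·|r̃(Re z) − r̃(p)| + (π/(4φ₀))·‖r̃′‖_{L²(ℝ)}·|z − p|^{−1/2}. -/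

import Mathlib

open Real Complex MeasureTheory

private lemma arg_eq_arctan_of_re_pos {w : ℂ} (h : 0 < w.re) :
    Complex.arg w = Real.arctan (w.im / w.re) := by
  have habs : |Complex.arg w| < Real.pi / 2 :=
    Complex.abs_arg_lt_pi_div_two_iff.mpr (Or.inl h)
  exact (Real.arctan_eq_of_tan_eq (Complex.tan_arg w)
    ⟨(abs_lt.mp habs).1, (abs_lt.mp habs).2⟩).symm

private lemma norm_sub_le_L2 (r : ℝ → ℂ) (hr : Differentiable ℝ r)
    (hr2 : MemLp (deriv r) 2 (volume : Measure ℝ)) (p x : ℝ) :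
    ‖r x - r p‖ ≤ (eLpNorm (deriv r) 2 (volume : Measure ℝ)).toReal * |x - p| ^ (1/2 : ℝ) := by
  set μ' := (volume : Measure ℝ).restrict (Set.uIoc p x) with hμ'
  have hmeas : AEStronglyMeasurable (deriv r) μ' := hr2.1.restrict
  have hμu : μ' Set.univ = ENNReal.ofReal |x - p| := by
    rw [Measure.restrict_apply_univ, Set.uIoc, Real.volume_Ioc]
    congr 1
    exact max_sub_min_eq_abs p x
  have hbound : eLpNorm (deriv r) 1 μ' ≤
      eLpNorm (deriv r) 2 (volume : Measure ℝ) * ENNReal.ofReal |x - p| ^ (1/2 : ℝ) := by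
    calc eLpNorm (deriv r) 1 μ'
        ≤ eLpNorm (deriv r) 2 μ' *
            μ' Set.univ ^ (1/(1:ENNReal).toReal - 1/(2:ENNReal).toReal) :=
          eLpNorm_le_eLpNorm_mul_rpow_measure_univ one_le_two hmeas
      _ ≤ eLpNorm (deriv r) 2 (volume : Measure ℝ) * ENNReal.ofReal |x - p| ^ (1/2 : ℝ) := by
          rw [hμu, show 1/(1:ENNReal).toReal - 1/(2:ENNReal).toReal = (1/2:ℝ) by norm_num]
          exact mul_le_mul_left (eLpNorm_restrict_le _ _ _ _) _
  have hfin : eLpNorm (deriv r) 2 (volume : Measure ℝ) * ENNReal.ofReal |x - p| ^ (1/2 : ℝ) < ⊤ :=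
    ENNReal.mul_lt_top hr2.2 (ENNReal.rpow_lt_top_of_nonneg (by norm_num) ENNReal.ofReal_ne_top)
  have hInt : IntervalIntegrable (deriv r) volume p x := by
    rw [intervalIntegrable_iff]
    exact memLp_one_iff_integrable.mp ⟨hmeas, lt_of_le_of_lt hbound hfin⟩
  have hFTC : ∫ t in p..x, deriv r t = r x - r p :=
    intervalIntegral.integral_deriv_eq_sub (fun t _ => hr t) hInt
  have h1 : ∫ t in Set.uIoc p x, ‖deriv r t‖ = (eLpNorm (deriv r) 1 μ').toReal := by
    rw [eLpNorm_one_eq_lintegral_enorm, integral_norm_eq_lintegral_enorm hmeas]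
  calc ‖r x - r p‖ = ‖∫ t in p..x, deriv r t‖ := by rw [hFTC]
    _ ≤ ∫ t in Set.uIoc p x, ‖deriv r t‖ := intervalIntegral.norm_integral_le_integral_norm_uIoc
    _ = (eLpNorm (deriv r) 1 μ').toReal := h1
    _ ≤ (eLpNorm (deriv r) 2 (volume : Measure ℝ) * ENNReal.ofReal |x - p| ^ (1/2 : ℝ)).toReal :=
        ENNReal.toReal_mono hfin.ne hbound
    _ = (eLpNorm (deriv r) 2 (volume : Measure ℝ)).toReal * |x - p| ^ (1/2 : ℝ) := by
        rw [ENNReal.toReal_mul, ← ENNReal.toReal_rpow, ENNReal.toReal_ofReal (abs_nonneg _)]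

set_option maxHeartbeats 1000000 in
/-- ∂̄-extension estimate.  Let `p ∈ ℝ`, `φ₀ ∈ (0, π/2)`, `r̃ : ℝ → ℂ` differentiable with
`r̃′ ∈ L²(ℝ)`, and `X : ℝ → ℝ` differentiable with `0 ≤ X ≤ 1`.  On the open sector
`Ω = {z : 0 < arg(z − p) < φ₀}` define
`R(z) = (1 − X(Re z))(r̃(Re z) − r̃(p))cos((π/(2φ₀))arg(z − p)) + r̃(p)`.
Then `R` is (real-)differentiable on `Ω`, and its ∂̄-derivative
`∂̄R = (∂_x R + i∂_y R)/2` satisfies, for all `z ∈ Ω`,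
`|∂̄R(z)| ≤ (1/2)|r̃′(Re z)| + (1/2)|X′(Re z)||r̃(Re z) − r̃(p)|
  + (π/(4φ₀))‖r̃′‖_{L²}|z − p|^{−1/2}`. -/
theorem dbar_extension_estimate (p φ₀ : ℝ) (hφ₀ : φ₀ ∈ Set.Ioo 0 (Real.pi / 2))
    (r : ℝ → ℂ) (hr : Differentiable ℝ r)
    (hr2 : MemLp (deriv r) 2 (volume : Measure ℝ))
    (X : ℝ → ℝ) (hX : Differentiable ℝ X)
    (hX0 : ∀ x : ℝ, 0 ≤ X x) (hX1 : ∀ x : ℝ, X x ≤ 1) :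
    let Ω : Set ℂ := {z : ℂ | 0 < Complex.arg (z - p) ∧ Complex.arg (z - p) < φ₀}
    let R : ℂ → ℂ := fun z =>
      (1 - (X z.re : ℂ)) * (r z.re - r p) *
        ((Real.cos ((Real.pi / (2 * φ₀)) * Complex.arg (z - p)) : ℝ) : ℂ) + r p
    ∀ z ∈ Ω, DifferentiableAt ℝ R z ∧
      ‖(fderiv ℝ R z 1 + Complex.I * fderiv ℝ R z Complex.I) / 2‖
        ≤ (1/2) * ‖deriv r z.re‖ + (1/2) * |deriv X z.re| * ‖r z.re - r p‖
          + (Real.pi / (4 * φ₀)) * (eLpNorm (deriv r) 2 (volume : Measure ℝ)).toReal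
            * ‖z - p‖ ^ (-(1:ℝ)/2) := by
  intro Ω R z hz
  obtain ⟨h1, h2⟩ := hz
  have hφ0 : 0 < φ₀ := hφ₀.1
  have hπ : 0 < Real.pi := Real.pi_pos
  have hwne : z - (p:ℂ) ≠ 0 := by
    intro h0
    rw [h0, Complex.arg_zero] at h1
    exact lt_irrefl 0 h1
  have harg2 : Complex.arg (z - p) < Real.pi / 2 := h2.trans hφ₀.2
  have hwre : 0 < (z - (p:ℂ)).re :=
    (Complex.abs_arg_lt_pi_div_two_iff.mp
      (abs_lt.mpr ⟨by linarith, harg2⟩)).resolve_right hwne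
  have ha : 0 < z.re - p := by simpa using hwre
  have hane : z.re - p ≠ 0 := ne_of_gt ha
  set F : ℂ → ℂ := fun ζ =>
    (1 - (X ζ.re : ℂ)) * (r ζ.re - r p) *
      ((Real.cos ((Real.pi / (2 * φ₀)) * Real.arctan (ζ.im / (ζ.re - p))) : ℝ) : ℂ) + r p
    with hF_def
  have hRF : R =ᶠ[nhds z] F := by
    have hopen : IsOpen {ζ : ℂ | 0 < ζ.re - p} :=
      isOpen_lt continuous_const (Complex.continuous_re.sub continuous_const)
    filter_upwards [hopen.mem_nhds ha] with ζ hζ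
    have hζ' : 0 < (ζ - (p:ℂ)).re := by simpa using hζ
    have harg : Complex.arg (ζ - p) = Real.arctan (ζ.im / (ζ.re - p)) := by
      have := arg_eq_arctan_of_re_pos hζ'
      simpa using this
    simp only [R, F, harg]
  -- differentiability of F at z
  have hre : DifferentiableAt ℝ (fun ζ : ℂ => ζ.re) z := Complex.reCLM.differentiableAt
  have him : DifferentiableAt ℝ (fun ζ : ℂ => ζ.im) z := Complex.imCLM.differentiableAt
  have hXre : DifferentiableAt ℝ (fun ζ : ℂ => ((X ζ.re : ℝ) : ℂ)) z :=
    Complex.ofRealCLM.differentiableAt.comp z ((hX z.re).comp z hre)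
  have hrre : DifferentiableAt ℝ (fun ζ : ℂ => r ζ.re) z := (hr z.re).comp z hre
  have hane' : (fun ζ : ℂ => ζ.re - p) z ≠ 0 := hane
  have hq : DifferentiableAt ℝ (fun ζ : ℂ => ζ.im / (ζ.re - p)) z := by
    simp only [div_eq_mul_inv]
    exact him.mul ((hre.sub_const p).inv hane')
  have hcosre : DifferentiableAt ℝ
      (fun ζ : ℂ => Real.cos ((Real.pi / (2 * φ₀)) * Real.arctan (ζ.im / (ζ.re - p)))) z :=
    Real.differentiable_cos.differentiableAt.comp z
      ((Real.differentiable_arctan.differentiableAt.comp z hq).const_mul _)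
  have hF : DifferentiableAt ℝ F z := by
    rw [hF_def]
    exact ((((differentiableAt_const _).sub hXre).mul
      (hrre.sub (differentiableAt_const _))).mul
      (Complex.ofRealCLM.differentiableAt.comp z hcosre)).add_const _
  have hRdiff : DifferentiableAt ℝ R z := hF.congr_of_eventuallyEq hRF
  refine ⟨hRdiff, ?_⟩
  -- abbreviations
  have hc0 : 0 < Real.pi / (2 * φ₀) := by positivity
  -- derivative along the real direction
  have hshift : HasDerivAt (fun s : ℝ => z.re + s) 1 0 := (hasDerivAt_id (0:ℝ)).const_add z.re
  have hXd : HasDerivAt X (deriv X z.re) (z.re + 0) := by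
    rw [add_zero]; exact (hX z.re).hasDerivAt
  have hA : HasDerivAt (fun s : ℝ => (1:ℂ) - ((X (z.re + s) : ℝ) : ℂ))
      (-((deriv X z.re : ℝ) : ℂ)) 0 := by
    simpa [Function.comp] using ((hXd.comp 0 hshift).ofReal_comp).const_sub 1
  have hrd : HasDerivAt r (deriv r z.re) (z.re + 0) := by
    rw [add_zero]; exact (hr z.re).hasDerivAt
  have hB : HasDerivAt (fun s : ℝ => r (z.re + s) - r p) (deriv r z.re) 0 := by
    simpa [Function.comp] using (hrd.scomp 0 hshift).sub_const (r p)
  have hden : HasDerivAt (fun s : ℝ => z.re + s - p) 1 0 := hshift.sub_const p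
  have hd0 : (fun s : ℝ => z.re + s - p) 0 ≠ 0 := by
    show z.re + 0 - p ≠ 0
    simpa using hane
  have hq1 : HasDerivAt (fun s : ℝ => z.im / (z.re + s - p)) (-z.im / (z.re - p)^2) 0 := by
    simpa [Pi.div_def] using (hasDerivAt_const (0:ℝ) z.im).div hden hd0
  have harct : HasDerivAt Real.arctan (1 / (1 + (z.im / (z.re - p))^2))
      (z.im / (z.re + 0 - p)) := by
    rw [add_zero]; exact Real.hasDerivAt_arctan _
  have hθ1 : HasDerivAt (fun s : ℝ => Real.arctan (z.im / (z.re + s - p)))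
      (-z.im / ((z.re - p)^2 + z.im^2)) 0 := by
    have h' : HasDerivAt (fun s : ℝ => Real.arctan (z.im / (z.re + s - p)))
        (1 / (1 + (z.im / (z.re - p))^2) * (-z.im / (z.re - p)^2)) 0 := by
      simpa [Function.comp_def] using harct.comp 0 hq1
    have heq : 1 / (1 + (z.im / (z.re - p))^2) * (-z.im / (z.re - p)^2)
        = -z.im / ((z.re - p)^2 + z.im^2) := by
      have hm : (z.re - p)^2 + z.im^2 ≠ 0 := by positivity
      field_simp
    exact heq ▸ h'
  have hcospt1 : HasDerivAt Real.cos
      (-Real.sin ((Real.pi/(2*φ₀)) * Real.arctan (z.im / (z.re - p))))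
      ((Real.pi/(2*φ₀)) * Real.arctan (z.im / (z.re + 0 - p))) := by
    rw [add_zero]; exact Real.hasDerivAt_cos _
  have hcs1 : HasDerivAt (fun s : ℝ =>
      ((Real.cos ((Real.pi/(2*φ₀)) * Real.arctan (z.im / (z.re + s - p))) : ℝ) : ℂ))
      (Complex.ofReal (-Real.sin ((Real.pi/(2*φ₀)) * Real.arctan (z.im / (z.re - p))) *
        ((Real.pi/(2*φ₀)) * (-z.im / ((z.re - p)^2 + z.im^2))))) 0 := by
    simpa [Function.comp] using ((hcospt1.comp 0 (hθ1.const_mul (Real.pi/(2*φ₀)))).ofReal_comp)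
  have hl1 : HasDerivAt (fun s : ℝ => z + (s:ℂ)) 1 0 := by
    simpa using ((hasDerivAt_id (0:ℝ)).ofReal_comp.const_add z)
  have hcomp1 : (F ∘ fun s : ℝ => z + (s:ℂ)) = fun s : ℝ =>
      ((1 - ((X (z.re + s) : ℝ) : ℂ)) * (r (z.re + s) - r p)) *
        ((Real.cos ((Real.pi/(2*φ₀)) * Real.arctan (z.im / (z.re + s - p))) : ℝ) : ℂ) + r p := by
    funext s
    simp [F, Function.comp, Complex.add_re, Complex.add_im, Complex.ofReal_re,
      Complex.ofReal_im, mul_assoc]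
  have hD1 : HasDerivAt (F ∘ fun s : ℝ => z + (s:ℂ))
      ((-((deriv X z.re : ℝ) : ℂ) * (r z.re - r p)
          + (1 - ((X z.re : ℝ) : ℂ)) * deriv r z.re) *
        ((Real.cos ((Real.pi/(2*φ₀)) * Real.arctan (z.im / (z.re - p))) : ℝ) : ℂ)
        + ((1 - ((X z.re : ℝ) : ℂ)) * (r z.re - r p)) *
          (Complex.ofReal (-Real.sin ((Real.pi/(2*φ₀)) * Real.arctan (z.im / (z.re - p))) *
            ((Real.pi/(2*φ₀)) * (-z.im / ((z.re - p)^2 + z.im^2)))))) 0 := by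
    rw [hcomp1]
    have h := ((hA.mul hB).mul hcs1).add_const (r p)
    simpa using h
  have hfder1 : HasDerivAt (F ∘ fun s : ℝ => z + (s:ℂ)) (fderiv ℝ F z 1) 0 := by
    refine hF.hasFDerivAt.comp_hasDerivAt_of_eq 0 hl1 ?_
    simp
  have e1 := hfder1.unique hD1
  -- derivative along the imaginary direction
  have hq2 : HasDerivAt (fun s : ℝ => (z.im + s) / (z.re - p)) (1 / (z.re - p)) 0 := by
    simpa using ((hasDerivAt_id (0:ℝ)).const_add z.im).div_const (z.re - p)
  have harct2 : HasDerivAt Real.arctan (1 / (1 + (z.im / (z.re - p))^2))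
      ((z.im + 0) / (z.re - p)) := by
    rw [add_zero]; exact Real.hasDerivAt_arctan _
  have hθ2 : HasDerivAt (fun s : ℝ => Real.arctan ((z.im + s) / (z.re - p)))
      ((z.re - p) / ((z.re - p)^2 + z.im^2)) 0 := by
    have h' : HasDerivAt (fun s : ℝ => Real.arctan ((z.im + s) / (z.re - p)))
        (1 / (1 + (z.im / (z.re - p))^2) * (1 / (z.re - p))) 0 := by
      simpa [Function.comp_def] using harct2.comp 0 hq2
    have heq : 1 / (1 + (z.im / (z.re - p))^2) * (1 / (z.re - p))
        = (z.re - p) / ((z.re - p)^2 + z.im^2) := by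
      have hm : (z.re - p)^2 + z.im^2 ≠ 0 := by positivity
      field_simp
    exact heq ▸ h'
  have hcospt2 : HasDerivAt Real.cos
      (-Real.sin ((Real.pi/(2*φ₀)) * Real.arctan (z.im / (z.re - p))))
      ((Real.pi/(2*φ₀)) * Real.arctan ((z.im + 0) / (z.re - p))) := by
    rw [add_zero]; exact Real.hasDerivAt_cos _
  have hcs2 : HasDerivAt (fun s : ℝ =>
      ((Real.cos ((Real.pi/(2*φ₀)) * Real.arctan ((z.im + s) / (z.re - p))) : ℝ) : ℂ))
      (Complex.ofReal (-Real.sin ((Real.pi/(2*φ₀)) * Real.arctan (z.im / (z.re - p))) *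
        ((Real.pi/(2*φ₀)) * ((z.re - p) / ((z.re - p)^2 + z.im^2))))) 0 := by
    simpa [Function.comp] using ((hcospt2.comp 0 (hθ2.const_mul (Real.pi/(2*φ₀)))).ofReal_comp)
  have hl2 : HasDerivAt (fun s : ℝ => z + (s:ℂ) * Complex.I) Complex.I 0 := by
    simpa using (((hasDerivAt_id (0:ℝ)).ofReal_comp.mul_const Complex.I).const_add z)
  have hcomp2 : (F ∘ fun s : ℝ => z + (s:ℂ) * Complex.I) = fun s : ℝ =>
      ((1 - ((X z.re : ℝ) : ℂ)) * (r z.re - r p)) *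
        ((Real.cos ((Real.pi/(2*φ₀)) * Real.arctan ((z.im + s) / (z.re - p))) : ℝ) : ℂ) + r p := by
    funext s
    simp [F, Function.comp, Complex.add_re, Complex.add_im, Complex.mul_re, Complex.mul_im,
      Complex.I_re, Complex.I_im, Complex.ofReal_re, Complex.ofReal_im, mul_assoc]
  have hD2 : HasDerivAt (F ∘ fun s : ℝ => z + (s:ℂ) * Complex.I)
      (((1 - ((X z.re : ℝ) : ℂ)) * (r z.re - r p)) *
        (Complex.ofReal (-Real.sin ((Real.pi/(2*φ₀)) * Real.arctan (z.im / (z.re - p))) *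
          ((Real.pi/(2*φ₀)) * ((z.re - p) / ((z.re - p)^2 + z.im^2)))))) 0 := by
    rw [hcomp2]
    exact (hcs2.const_mul _).add_const (r p)
  have hfder2 : HasDerivAt (F ∘ fun s : ℝ => z + (s:ℂ) * Complex.I) (fderiv ℝ F z Complex.I) 0 := by
    refine hF.hasFDerivAt.comp_hasDerivAt_of_eq 0 hl2 ?_
    simp
  have e2 := hfder2.unique hD2
  -- notation
  have hfd : fderiv ℝ R z = fderiv ℝ F z := hRF.fderiv_eq
  have hm : (0:ℝ) < (z.re - p)^2 + z.im^2 :=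
    add_pos_of_pos_of_nonneg (pow_pos ha 2) (sq_nonneg _)
  have hβ : ‖z - ↑p‖ = Real.sqrt ((z.re - p)^2 + z.im^2) := by
    rw [Complex.norm_def, Complex.normSq_apply]
    simp only [Complex.sub_re, Complex.sub_im, Complex.ofReal_re, Complex.ofReal_im, sub_zero]
    congr 1; ring
  have hβpos : 0 < ‖z - ↑p‖ := by rw [hβ]; exact Real.sqrt_pos.mpr hm
  have hab : z.re - p ≤ ‖z - ↑p‖ := by
    have h := Complex.re_le_norm (z - ↑p)
    simpa using h
  have hrr : ‖r z.re - r p‖ ≤ (eLpNorm (deriv r) 2 (volume : Measure ℝ)).toReal *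
      ‖z - ↑p‖ ^ ((1:ℝ)/2) := by
    refine (norm_sub_le_L2 r hr hr2 p z.re).trans ?_
    have habs : |z.re - p| ≤ ‖z - ↑p‖ := by rw [abs_of_pos ha]; exact hab
    gcongr
  have h1X : ‖(1:ℂ) - ((X z.re : ℝ) : ℂ)‖ ≤ 1 := by
    rw [show (1:ℂ) - ((X z.re : ℝ) : ℂ) = (((1 - X z.re : ℝ)) : ℂ) by push_cast; ring,
      Complex.norm_real, Real.norm_eq_abs]
    rw [abs_le]
    constructor
    · linarith [hX1 z.re]
    · linarith [hX0 z.re]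
  have hcos : |Real.cos ((Real.pi/(2*φ₀)) * Real.arctan (z.im / (z.re - p)))| ≤ 1 :=
    abs_le.mpr ⟨Real.neg_one_le_cos _, Real.cos_le_one _⟩
  have hsinb : |Real.sin ((Real.pi/(2*φ₀)) * Real.arctan (z.im / (z.re - p))) * (Real.pi/(2*φ₀))|
      ≤ Real.pi/(2*φ₀) := by
    rw [abs_mul, abs_of_pos hc0]
    have : |Real.sin ((Real.pi/(2*φ₀)) * Real.arctan (z.im / (z.re - p)))| ≤ 1 :=
      abs_le.mpr ⟨Real.neg_one_le_sin _, Real.sin_le_one _⟩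
    nlinarith [hc0]
  have hvnorm : ‖(Complex.ofReal (z.im/((z.re - p)^2+z.im^2)) -
      Complex.I * Complex.ofReal ((z.re - p)/((z.re - p)^2+z.im^2)))‖
      = (‖z - ↑p‖)⁻¹ := by
    rw [Complex.norm_def, Complex.normSq_apply]
    simp only [Complex.sub_re, Complex.sub_im, Complex.mul_re, Complex.mul_im,
      Complex.I_re, Complex.I_im, Complex.ofReal_re, Complex.ofReal_im, mul_zero, zero_mul,
      one_mul, sub_zero, zero_sub, mul_one, zero_add]
    rw [hβ, ← Real.sqrt_inv]
    have hmne : ((z.re - p)^2 + z.im^2) ≠ 0 := ne_of_gt hm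
    rw [show z.im / ((z.re - p)^2 + z.im^2) * (z.im / ((z.re - p)^2 + z.im^2)) +
        -((z.re - p) / ((z.re - p)^2 + z.im^2)) * -((z.re - p) / ((z.re - p)^2 + z.im^2))
        = ((z.re - p)^2 + z.im^2)⁻¹ from by
      rw [neg_mul_neg, div_mul_div_comm, div_mul_div_comm, ← add_div,
        show z.im * z.im + (z.re - p) * (z.re - p) = (z.re - p)^2 + z.im^2 from by ring,
        div_mul_cancel_left₀ hmne]]
  -- split into the two pieces
  have hsplit : ((-((deriv X z.re : ℝ) : ℂ) * (r z.re - r p)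
          + (1 - ((X z.re : ℝ) : ℂ)) * deriv r z.re) *
        ((Real.cos ((Real.pi/(2*φ₀)) * Real.arctan (z.im / (z.re - p))) : ℝ) : ℂ)
        + ((1 - ((X z.re : ℝ) : ℂ)) * (r z.re - r p)) *
          (Complex.ofReal (-Real.sin ((Real.pi/(2*φ₀)) * Real.arctan (z.im / (z.re - p))) *
            ((Real.pi/(2*φ₀)) * (-z.im / ((z.re - p)^2 + z.im^2))))))
      + Complex.I * (((1 - ((X z.re : ℝ) : ℂ)) * (r z.re - r p)) *
        (Complex.ofReal (-Real.sin ((Real.pi/(2*φ₀)) * Real.arctan (z.im / (z.re - p))) *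
          ((Real.pi/(2*φ₀)) * ((z.re - p) / ((z.re - p)^2 + z.im^2))))))
      = ((-((deriv X z.re : ℝ) : ℂ) * (r z.re - r p)
          + (1 - ((X z.re : ℝ) : ℂ)) * deriv r z.re) *
        ((Real.cos ((Real.pi/(2*φ₀)) * Real.arctan (z.im / (z.re - p))) : ℝ) : ℂ))
      + (((1 - ((X z.re : ℝ) : ℂ)) * (r z.re - r p)) *
        (Complex.ofReal (Real.sin ((Real.pi/(2*φ₀)) * Real.arctan (z.im / (z.re - p))) *
            (Real.pi/(2*φ₀))) *
          (Complex.ofReal (z.im/((z.re - p)^2+z.im^2)) -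
            Complex.I * Complex.ofReal ((z.re - p)/((z.re - p)^2+z.im^2))))) := by
    push_cast
    ring
  have hPbound : ‖(-((deriv X z.re : ℝ) : ℂ) * (r z.re - r p)
          + (1 - ((X z.re : ℝ) : ℂ)) * deriv r z.re) *
        ((Real.cos ((Real.pi/(2*φ₀)) * Real.arctan (z.im / (z.re - p))) : ℝ) : ℂ)‖
      ≤ |deriv X z.re| * ‖r z.re - r p‖ + ‖deriv r z.re‖ := by
    rw [norm_mul, Complex.norm_real, Real.norm_eq_abs]
    calc ‖-((deriv X z.re : ℝ) : ℂ) * (r z.re - r p)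
          + (1 - ((X z.re : ℝ) : ℂ)) * deriv r z.re‖ *
            |Real.cos ((Real.pi/(2*φ₀)) * Real.arctan (z.im / (z.re - p)))|
        ≤ (|deriv X z.re| * ‖r z.re - r p‖ + ‖deriv r z.re‖) * 1 := by
          apply mul_le_mul ?_ hcos (abs_nonneg _) (by positivity)
          refine (norm_add_le _ _).trans ?_
          rw [norm_mul, norm_mul, norm_neg, Complex.norm_real, Real.norm_eq_abs]
          have h2 : ‖(1:ℂ) - ((X z.re : ℝ) : ℂ)‖ * ‖deriv r z.re‖ ≤ 1 * ‖deriv r z.re‖ :=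
            mul_le_mul_of_nonneg_right h1X (norm_nonneg _)
          linarith
      _ = |deriv X z.re| * ‖r z.re - r p‖ + ‖deriv r z.re‖ := mul_one _
  have hβhalf : ‖z - ↑p‖ ^ ((1:ℝ)/2) * (‖z - ↑p‖)⁻¹
      = ‖z - ↑p‖ ^ (-(1:ℝ)/2) := by
    rw [← Real.rpow_neg_one (‖z - ↑p‖), ← Real.rpow_add hβpos]
    norm_num
  have hQbound : ‖((1 - ((X z.re : ℝ) : ℂ)) * (r z.re - r p)) *
        (Complex.ofReal (Real.sin ((Real.pi/(2*φ₀)) * Real.arctan (z.im / (z.re - p))) *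
            (Real.pi/(2*φ₀))) *
          (Complex.ofReal (z.im/((z.re - p)^2+z.im^2)) -
            Complex.I * Complex.ofReal ((z.re - p)/((z.re - p)^2+z.im^2))))‖
      ≤ 2 * ((Real.pi/(4*φ₀)) * ((eLpNorm (deriv r) 2 (volume : Measure ℝ)).toReal *
          ‖z - ↑p‖ ^ (-(1:ℝ)/2))) := by
    have hfour : Real.pi/(2*φ₀) = 2*(Real.pi/(4*φ₀)) := by
      field_simp
      ring
    rw [norm_mul, norm_mul, norm_mul, hvnorm, Complex.norm_real, Real.norm_eq_abs]
    calc ‖(1:ℂ) - ((X z.re : ℝ) : ℂ)‖ * ‖r z.re - r p‖ *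
          (|Real.sin ((Real.pi/(2*φ₀)) * Real.arctan (z.im / (z.re - p))) * (Real.pi/(2*φ₀))| *
            (‖z - ↑p‖)⁻¹)
        ≤ 1 * ((eLpNorm (deriv r) 2 (volume : Measure ℝ)).toReal *
            ‖z - ↑p‖ ^ ((1:ℝ)/2)) * ((Real.pi/(2*φ₀)) * (‖z - ↑p‖)⁻¹) := by
          gcongr
      _ = 2 * ((Real.pi/(4*φ₀)) * ((eLpNorm (deriv r) 2 (volume : Measure ℝ)).toReal *
            ‖z - ↑p‖ ^ (-(1:ℝ)/2))) := by
          rw [one_mul, ← hβhalf, hfour]; ring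
  rw [hfd, e1, e2, hsplit]
  have htri := norm_add_le ((-((deriv X z.re : ℝ) : ℂ) * (r z.re - r p)
          + (1 - ((X z.re : ℝ) : ℂ)) * deriv r z.re) *
        ((Real.cos ((Real.pi/(2*φ₀)) * Real.arctan (z.im / (z.re - p))) : ℝ) : ℂ))
      (((1 - ((X z.re : ℝ) : ℂ)) * (r z.re - r p)) *
        (Complex.ofReal (Real.sin ((Real.pi/(2*φ₀)) * Real.arctan (z.im / (z.re - p))) *
            (Real.pi/(2*φ₀))) *
          (Complex.ofReal (z.im/((z.re - p)^2+z.im^2)) -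
            Complex.I * Complex.ofReal ((z.re - p)/((z.re - p)^2+z.im^2)))))
  rw [norm_div]
  have hn2 : ‖(2:ℂ)‖ = 2 := by norm_num
  rw [hn2]
  linarith [hPbound, hQbound, htri]
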